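/- Let M be a finite set and 𝒮 the family of union-free generic sets of partial orders on M. Then 𝒮 is connected in the following sense: for every S ∈ 𝒮 with |S| = k ≥ 3 there exists S_m ⊊ S with |S_m| = k − 1 and S_m ∈ 𝒮. -/

import Mathlib

open scoped Classical

variable {M : Type*}

/-- `p ⊆ M × M` is a partial order: reflexive, antisymmetric, transitive. -/
def IsPO (p : Set (M × M)) : Prop :=
  (∀ x : M, (x, x) ∈ p) ∧ (∀ x y : M, (x, y) ∈ p → (y, x) ∈ p → x = y) ∧
  (∀ x y z : M, (x, y) ∈ p → (y, z) ∈ p → (x, z) ∈ p)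

/-- The set 𝒫 of all partial orders on `M`. -/
def Posets (M : Type*) : Set (Set (M × M)) := {p | IsPO p}

/-- The closure operator γ(P) = {p ∈ 𝒫 | ⋂P ⊆ p ⊆ ⋃P}. -/
def gam (P : Set (Set (M × M))) : Set (Set (M × M)) :=
  {q | q ∈ Posets M ∧ (⋂ p ∈ P, p) ⊆ q ∧ q ⊆ ⋃ p ∈ P, p}

/-- `S` is union-free generic: (C1) `S ⊊ γ(S)` and (C2) no family of proper
subsets of `S` has closures whose union is `γ(S)`. -/
def IsUfg (S : Set (Set (M × M))) : Prop :=
  S ⊆ Posets M ∧ S ⊂ gam S ∧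
    ¬ ∃ (ℓ : ℕ) (A : Fin ℓ → Set (Set (M × M))),
        (∀ i, A i ⊂ S) ∧ (⋃ i, gam (A i)) = gam S

section Aux

lemma gam_mono {A B : Set (Set (M × M))} (h : A ⊆ B) : gam A ⊆ gam B := by
  rintro q ⟨hq, hl, hu⟩
  refine ⟨hq, fun x hx => hl ?_, fun x hx => ?_⟩
  · simp only [Set.mem_iInter] at hx ⊢
    exact fun p hp => hx p (h hp)
  · obtain ⟨p, hp, hxp⟩ := Set.mem_iUnion₂.mp (hu hx)
    exact Set.mem_iUnion₂.mpr ⟨p, h hp, hxp⟩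

lemma mem_gam_self {S : Set (Set (M × M))} (hP : S ⊆ Posets M) {t : Set (M × M)}
    (ht : t ∈ S) : t ∈ gam S := by
  refine ⟨hP ht, fun x hx => ?_, fun x hx => Set.mem_iUnion₂.mpr ⟨t, ht, hx⟩⟩
  simp only [Set.mem_iInter] at hx
  exact hx t ht

/-- A witness for `T` makes `T` union-free generic. -/
lemma ufg_of_witness {T : Set (Set (M × M))} (hP : T ⊆ Posets M)
    (h2 : ∃ t₁ ∈ T, ∃ t₂ ∈ T, t₁ ≠ t₂)
    {q : Set (M × M)} (hq : q ∈ gam T) (hv : ∀ s ∈ T, q ∉ gam (T \ {s})) :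
    IsUfg T := by
  obtain ⟨t₁, ht₁, t₂, ht₂, hne⟩ := h2
  have hqT : q ∉ T := by
    intro hqT
    rcases eq_or_ne q t₁ with rfl | h1
    · exact hv t₂ ht₂ (mem_gam_self (fun x hx => hP hx.1) ⟨ht₁, hne⟩)
    · exact hv t₁ ht₁ (mem_gam_self (fun x hx => hP hx.1) ⟨hqT, h1⟩)
  refine ⟨hP, ⟨fun t ht => mem_gam_self hP ht, fun hsub => hqT (hsub hq)⟩, ?_⟩
  rintro ⟨ℓ, A, hA, hcov⟩
  have : q ∈ ⋃ i, gam (A i) := hcov ▸ hq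
  obtain ⟨i, hi⟩ := Set.mem_iUnion.mp this
  obtain ⟨s, hsT, hsA⟩ := Set.exists_of_ssubset (hA i)
  exact hv s hsT (gam_mono (fun x hx => Set.mem_diff_singleton.mpr
    ⟨(hA i).1 hx, fun hxs => hsA (by rwa [hxs] at hx)⟩) hi)

/-- A ufg set has a witness. -/
lemma witness_of_ufg [Fintype M] {S : Set (Set (M × M))} (hS : IsUfg S)
    (hne : S.Nonempty) :
    ∃ q ∈ gam S, ∀ s ∈ S, q ∉ gam (S \ {s}) := by
  by_contra hcon
  push_neg at hcon
  apply hS.2.2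
  have hfin : S.Finite := Set.toFinite S
  refine ⟨hfin.toFinset.card, fun i => S \ {(hfin.toFinset.equivFin.symm i : Set (M × M))}, ?_, ?_⟩
  · intro i
    have hmem : (hfin.toFinset.equivFin.symm i : Set (M × M)) ∈ S := by
      have := (hfin.toFinset.equivFin.symm i).2
      simpa using this
    exact ⟨Set.diff_subset, fun hsub => ((hsub hmem).2 rfl)⟩
  · apply Set.Subset.antisymm
    · exact Set.iUnion_subset fun i => gam_mono Set.diff_subset
    · intro q hq
      obtain ⟨s, hsS, hqs⟩ := hcon q hq
      have hsF : s ∈ hfin.toFinset := hfin.mem_toFinset.mpr hsS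
      refine Set.mem_iUnion.mpr ⟨hfin.toFinset.equivFin ⟨s, hsF⟩, ?_⟩
      simpa using hqs

end Aux

theorem stmt7 {M : Type*} [Fintype M] (S : Set (Set (M × M))) (hS : IsUfg S)
    (k : ℕ) (hk : 3 ≤ k) (hcard : S.ncard = k) :
    ∃ T : Set (Set (M × M)), T ⊂ S ∧ T.ncard = k - 1 ∧ IsUfg T := by
  classical
  have hfin : S.Finite := Set.toFinite S
  have hSne : S.Nonempty := by
    rw [← Set.ncard_pos hfin, hcard]; omega
  obtain ⟨q, hqgam, hw⟩ := witness_of_ufg hS hSne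
  obtain ⟨hqPO, hqlow, hqup⟩ := hqgam
  -- the descent: find s₀ ∈ S and a witness q' for T = S \ {s₀}
  obtain ⟨hqrefl, hqanti, hqtrans⟩ := hqPO
  have hST : ∀ s₀ : Set (M × M), ∀ p ∈ S \ {s₀}, p ∈ Posets M :=
    fun s₀ p hp => hS.1 hp.1
  have hS2 : ∃ a b, a ∈ S ∧ b ∈ S ∧ a ≠ b := by
    apply (Set.one_lt_ncard_iff hfin).mp
    omega
  have hTne : ∀ s₀ : Set (M × M), (S \ {s₀}).Nonempty := by
    intro s₀
    obtain ⟨a, b, ha, hb, hab⟩ := hS2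
    by_cases has : a = s₀
    · exact ⟨b, hb, fun h => hab (has ▸ (Set.mem_singleton_iff.mp h) ▸ rfl)⟩
    · exact ⟨a, ha, fun h => has (Set.mem_singleton_iff.mp h)⟩
  have hIT_sub_UT : ∀ s₀ : Set (M × M), (⋂ p ∈ S \ {s₀}, p) ⊆ ⋃ p ∈ S \ {s₀}, p := by
    intro s₀ x hx
    obtain ⟨t, ht⟩ := hTne s₀
    simp only [Set.mem_iInter] at hx
    exact Set.mem_iUnion₂.mpr ⟨t, ht, hx t ht⟩
  set N := {s : Set (M × M) | s ∈ S ∧ (⋂ p ∈ S \ {s}, p) ⊆ q} with hNdef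
  have main : ∃ s₀ ∈ S, ∃ q', q' ∈ gam (S \ {s₀}) ∧
      ∀ s ∈ S \ {s₀}, q' ∉ gam ((S \ {s₀}) \ {s}) := by
    rcases Set.eq_empty_or_nonempty N with hNe | hNne
    · -- Case 1 : N = ∅, take q' = ⋂ (S \ {s₀}) for any s₀
      obtain ⟨s₀, hs₀S⟩ := hSne
      refine ⟨s₀, hs₀S, ⋂ p ∈ S \ {s₀}, p, ⟨?_, le_refl _, hIT_sub_UT s₀⟩, ?_⟩
      · obtain ⟨t, htT⟩ := hTne s₀
        refine ⟨fun x => ?_, fun x z hx hz => ?_, fun x z w hx hz => ?_⟩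
        · simp only [Set.mem_iInter]
          exact fun p hp => (hST s₀ p hp).1 x
        · simp only [Set.mem_iInter] at hx hz
          exact (hST s₀ t htT).2.1 x z (hx t htT) (hz t htT)
        · simp only [Set.mem_iInter] at hx hz ⊢
          exact fun p hp => (hST s₀ p hp).2.2 x z w (hx p hp) (hz p hp)
      · intro s hsT hmem
        have hsnotN : s ∉ N := by rw [hNe]; exact Set.notMem_empty s
        have hnsub : ¬ (⋂ p ∈ S \ {s}, p) ⊆ q := fun h => hsnotN ⟨hsT.1, h⟩
        obtain ⟨x, hx, hxq⟩ := Set.not_subset.mp hnsub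
        have hx' : x ∈ ⋂ p ∈ (S \ {s₀}) \ {s}, p := by
          simp only [Set.mem_iInter] at hx ⊢
          exact fun p hp => hx p ⟨hp.1.1, hp.2⟩
        have hxIT : x ∈ ⋂ p ∈ S \ {s₀}, p := hmem.2.1 hx'
        have hxs : x ∈ s := by
          simp only [Set.mem_iInter] at hxIT
          exact hxIT s hsT
        apply hxq
        apply hqlow
        simp only [Set.mem_iInter] at hx ⊢
        intro p hp
        by_cases hps : p = s
        · exact hps ▸ hxs
        · exact hx p ⟨hp, hps⟩
    · -- Case 2 : N ≠ ∅
      set U : Set (M × M) → Set (M × M) := fun s => q \ ⋃ p ∈ S \ {s}, p with hUdef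
      have hU : ∀ s ∈ N, (U s).Nonempty := by
        intro s hs
        rcases Set.eq_empty_or_nonempty (U s) with he | h
        · exfalso
          apply hw s hs.1
          refine ⟨⟨hqrefl, hqanti, hqtrans⟩, hs.2, fun x hx => ?_⟩
          by_contra h2
          exact Set.eq_empty_iff_forall_notMem.mp he x ⟨hx, h2⟩
        · exact h
      set φ : M × M → ℕ :=
        fun z => {w : M × M | w ∈ q ∧ (w.1, z.1) ∈ q ∧ (z.2, w.2) ∈ q}.ncard with hφdef
      have hMMne : Nonempty (M × M) := by
        obtain ⟨s₁, hs₁⟩ := hNne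
        obtain ⟨z₀, _⟩ := hU s₁ hs₁
        exact ⟨z₀⟩
      have hychoice : ∀ s : Set (M × M), ∃ yy : M × M,
          s ∈ N → (yy ∈ U s ∧ ∀ z ∈ U s, φ yy ≤ φ z) := by
        intro s
        by_cases hs : s ∈ N
        · obtain ⟨a, ha, hmin⟩ := Set.exists_min_image _ φ (Set.toFinite _) (hU s hs)
          exact ⟨a, fun _ => ⟨ha, hmin⟩⟩
        · exact ⟨Classical.arbitrary _, fun h => absurd h hs⟩
      choose y hy using hychoice
      have hyU : ∀ s ∈ N, y s ∈ U s := fun s hs => (hy s hs).1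
      have hymin : ∀ s ∈ N, ∀ z ∈ U s, φ (y s) ≤ φ z := fun s hs => (hy s hs).2
      obtain ⟨s₀, hs₀N, hmax⟩ :=
        Set.exists_max_image N (fun s => φ (y s)) (Set.toFinite _) hNne
      have hs₀S : s₀ ∈ S := hs₀N.1
      set Dq : Set (Set (M × M)) :=
        {s | s ∈ S \ {s₀} ∧ (⋂ p ∈ (S \ {s₀}) \ {s}, p) ⊆ q} with hDqdef
      have hDqN : ∀ s ∈ Dq, s ∈ N := by
        intro s hs
        refine ⟨hs.1.1, fun x hx => hs.2 ?_⟩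
        simp only [Set.mem_iInter] at hx ⊢
        exact fun p hp => hx p ⟨hp.1.1, hp.2⟩
      have hITq : (⋂ p ∈ S \ {s₀}, p) ⊆ q := hs₀N.2
      have hyq : ∀ s ∈ Dq, y s ∈ q := fun s hs => (hyU s (hDqN s hs)).1
      have hys : ∀ s ∈ Dq, y s ∈ s := by
        intro s hs
        have h1 : y s ∈ ⋃ p ∈ S, p := hqup (hyq s hs)
        obtain ⟨p, hp, hyp⟩ := Set.mem_iUnion₂.mp h1
        by_cases hps : p = s
        · exact hps ▸ hyp
        · exact absurd (Set.mem_iUnion₂.mpr ⟨p, ⟨hp, hps⟩, hyp⟩) (hyU s (hDqN s hs)).2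
      set base : Set (M × M) :=
        (⋂ p ∈ S \ {s₀}, p) ∪ (⋃ s ∈ Dq, {y s}) with hbasedef
      set R : M → M → Prop := fun a b => (a, b) ∈ base with hRdef
      set q' : Set (M × M) := {z : M × M | Relation.TransGen R z.1 z.2} with hq'def
      have hbaseq : base ⊆ q := by
        rintro z (hz | hz)
        · exact hITq hz
        · obtain ⟨s, hs, hzy⟩ := Set.mem_iUnion₂.mp hz
          rw [Set.mem_singleton_iff] at hzy
          exact hzy ▸ hyq s hs
      have hstruct : ∀ a c : M, Relation.TransGen R a c →
          ((a, c) ∈ ⋂ p ∈ S \ {s₀}, p) ∨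
          ∃ s ∈ Dq, ((a, (y s).1) ∈ q ∧ ((y s).2, c) ∈ q) := by
        intro a c h
        induction h with
        | single hb =>
          rcases hb with h | h
          · exact Or.inl h
          · obtain ⟨s, hs, hzy⟩ := Set.mem_iUnion₂.mp h
            rw [Set.mem_singleton_iff] at hzy
            refine Or.inr ⟨s, hs, ?_, ?_⟩
            · rw [← hzy]; exact hqrefl _
            · rw [← hzy]; exact hqrefl _
        | tail hab hbc ih =>
          rcases ih with h1 | ⟨s, hsD, hy1, hy2⟩
          · rcases hbc with h2 | h2
            · left
              simp only [Set.mem_iInter] at h1 h2 ⊢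
              exact fun p hp => (hST s₀ p hp).2.2 _ _ _ (h1 p hp) (h2 p hp)
            · obtain ⟨s, hs, hzy⟩ := Set.mem_iUnion₂.mp h2
              rw [Set.mem_singleton_iff] at hzy
              refine Or.inr ⟨s, hs, ?_, ?_⟩
              · rw [← hzy]; exact hITq h1
              · rw [← hzy]; exact hqrefl _
          · exact Or.inr ⟨s, hsD, hy1, hqtrans _ _ _ hy2 (hbaseq hbc)⟩
      have hq'q : q' ⊆ q := by
        intro z hz
        rcases hstruct z.1 z.2 hz with h1 | ⟨s, hsD, h1, h2⟩
        · have := hITq h1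
          rwa [Prod.mk.eta] at this
        · have hyin : ((y s).1, (y s).2) ∈ q := by rw [Prod.mk.eta]; exact hyq s hsD
          have := hqtrans _ _ _ (hqtrans _ _ _ h1 hyin) h2
          rwa [Prod.mk.eta] at this
      have hITq' : (⋂ p ∈ S \ {s₀}, p) ⊆ q' := by
        intro z hz
        show Relation.TransGen R z.1 z.2
        exact Relation.TransGen.single (Or.inl (by rwa [Prod.mk.eta]))
      have hq'UT : q' ⊆ ⋃ p ∈ S \ {s₀}, p := by
        intro z hz
        by_contra hzn
        rcases hstruct z.1 z.2 hz with h1 | ⟨s, hsD, h1, h2⟩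
        · rw [Prod.mk.eta] at h1
          exact hzn (hIT_sub_UT s₀ h1)
        · have hzq : z ∈ q := hq'q hz
          have hzU : z ∈ U s₀ := ⟨hzq, hzn⟩
          have hyT : y s ∈ ⋃ p ∈ S \ {s₀}, p :=
            Set.mem_iUnion₂.mpr ⟨s, hsD.1, hys s hsD⟩
          have hne_zy : y s ≠ z := fun h => hzn (h ▸ hyT)
          have hCsub : {w : M × M | w ∈ q ∧ (w.1, z.1) ∈ q ∧ (z.2, w.2) ∈ q} ⊂
              {w : M × M | w ∈ q ∧ (w.1, (y s).1) ∈ q ∧ ((y s).2, w.2) ∈ q} := by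
            constructor
            · rintro w ⟨hwq, hw1, hw2⟩
              exact ⟨hwq, hqtrans _ _ _ hw1 h1, hqtrans _ _ _ h2 hw2⟩
            · intro hsup
              have hymem : y s ∈ {w : M × M | w ∈ q ∧ (w.1, (y s).1) ∈ q ∧ ((y s).2, w.2) ∈ q} :=
                ⟨hyq s hsD, hqrefl _, hqrefl _⟩
              have : y s ∈ {w : M × M | w ∈ q ∧ (w.1, z.1) ∈ q ∧ (z.2, w.2) ∈ q} := hsup hymem
              obtain ⟨-, ha, hb⟩ := this
              have e1 : (y s).1 = z.1 := hqanti _ _ ha h1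
              have e2 : (y s).2 = z.2 := hqanti _ _ h2 hb
              exact hne_zy (Prod.ext e1 e2)
          have hφlt : φ z < φ (y s) := Set.ncard_lt_ncard hCsub (Set.toFinite _)
          have hmin' : φ (y s₀) ≤ φ z := hymin s₀ hs₀N z hzU
          have hmax' : φ (y s) ≤ φ (y s₀) := hmax s (hDqN s hsD)
          omega
      refine ⟨s₀, hs₀S, q', ⟨⟨?_, ?_, ?_⟩, hITq', hq'UT⟩, ?_⟩
      · -- reflexive
        intro x
        refine Relation.TransGen.single (Or.inl ?_)
        simp only [Set.mem_iInter]
        exact fun p hp => (hST s₀ p hp).1 x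
      · -- antisymmetric
        intro x z hx hz
        exact hqanti x z (hq'q hx) (hq'q hz)
      · -- transitive
        intro x z w hx hz
        exact Relation.TransGen.trans hx hz
      · -- violations
        intro s hsT hmem
        by_cases hsD : s ∈ Dq
        · have hyq' : y s ∈ q' := by
            show Relation.TransGen R (y s).1 (y s).2
            refine Relation.TransGen.single (Or.inr ?_)
            rw [Prod.mk.eta]
            exact Set.mem_iUnion₂.mpr ⟨s, hsD, rfl⟩
          have h1 : y s ∈ ⋃ p ∈ (S \ {s₀}) \ {s}, p := hmem.2.2 hyq'
          obtain ⟨p, hp, hyp⟩ := Set.mem_iUnion₂.mp h1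
          exact (hyU s (hDqN s hsD)).2
            (Set.mem_iUnion₂.mpr ⟨p, ⟨hp.1.1, hp.2⟩, hyp⟩)
        · have hnsub : ¬ (⋂ p ∈ (S \ {s₀}) \ {s}, p) ⊆ q := fun h => hsD ⟨hsT, h⟩
          obtain ⟨x, hx, hxq⟩ := Set.not_subset.mp hnsub
          exact hxq (hq'q (hmem.2.1 hx))
  obtain ⟨s₀, hs₀S, q', hq'gam, hq'v⟩ := main
  set T := S \ {s₀} with hT
  have hTcard : T.ncard = k - 1 := by
    rw [hT, Set.ncard_diff_singleton_of_mem hs₀S, hcard]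
  have hT2 : ∃ t₁ ∈ T, ∃ t₂ ∈ T, t₁ ≠ t₂ := by
    have h1 : 1 < T.ncard := by omega
    obtain ⟨a, b, ha, hb, hab⟩ := (Set.one_lt_ncard_iff (Set.toFinite T)).mp h1
    exact ⟨a, ha, b, hb, hab⟩
  refine ⟨T, ⟨Set.diff_subset, fun hsub => ((hsub hs₀S).2 rfl)⟩, hTcard, ?_⟩
  exact ufg_of_witness (fun x hx => hS.1 hx.1) hT2 hq'gam hq'v
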